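/- Let l be a prime and G a finite non-abelian group with an abelian normal subgroup G' of index l. Then: (i) Z(G) ≤ G'; (ii) for every g ∈ G \ G', the power g^l lies in Z(G); (iii) for every g ∈ G \ G', the centralizer of g in G equals the subgroup generated by Z(G) and g; and (iv) for every g ∈ G \ G', the conjugacy class of g in G has cardinality [G : Z(G)]/l. (Claims used in the proof of Proposition 4.2: for g ∉ G' the centralizer of g is Z(G)·⟨g⟩ and h_g = [G:Z(G)]/l.) -/

import Mathlib

section Aux

open Pointwise

variable {l : ℕ} {G : Type*} [Group G] [Fintype G] {G' : Subgroup G} [G'.Normal]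

lemma aux_decomp (hl : l.Prime) (hidx : G'.index = l) {g : G} (hg : g ∉ G') (x : G) :
    ∃ a ∈ G', ∃ k : ℤ, x = a * g ^ k := by
  have htop : G' ⊔ Subgroup.zpowers g = ⊤ := by
    have hle : G' ≤ G' ⊔ Subgroup.zpowers g := le_sup_left
    have h1 : G'.relIndex (G' ⊔ Subgroup.zpowers g) * (G' ⊔ Subgroup.zpowers g).index
        = G'.index := Subgroup.relIndex_mul_index hle
    have hdvd : (G' ⊔ Subgroup.zpowers g).index ∣ l := by
      rw [← hidx, ← h1]; exact dvd_mul_left _ _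
    rcases hl.eq_one_or_self_of_dvd _ hdvd with h | h
    · exact Subgroup.index_eq_one.mp h
    · exfalso
      rw [h, hidx] at h1
      have hr : G'.relIndex (G' ⊔ Subgroup.zpowers g) = 1 := by
        have hl0 : 0 < l := hl.pos
        have : G'.relIndex (G' ⊔ Subgroup.zpowers g) * l = 1 * l := by rw [h1, one_mul]
        exact Nat.eq_of_mul_eq_mul_right hl0 this
      have hle2 : G' ⊔ Subgroup.zpowers g ≤ G' := Subgroup.relIndex_eq_one.mp hr
      exact hg (hle2 (le_sup_right (α := Subgroup G) (Subgroup.mem_zpowers g)))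
  have hx : x ∈ ((G' : Set G) * (Subgroup.zpowers g : Set G)) := by
    rw [← Subgroup.normal_mul, htop]; trivial
  obtain ⟨a, ha, b, hb, rfl⟩ := hx
  obtain ⟨k, rfl⟩ := hb
  exact ⟨a, ha, k, rfl⟩

lemma aux_center (hab : ∀ x y : G', x * y = y * x) (hl : l.Prime) (hidx : G'.index = l)
    {g : G} (hg : g ∉ G') {a : G} (ha : a ∈ G') (hcomm : a * g = g * a) :
    a ∈ Subgroup.center G := by
  rw [Subgroup.mem_center_iff]
  intro x
  obtain ⟨b, hb, k, rfl⟩ := aux_decomp hl hidx hg x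
  have h1 : a * b = b * a := by
    have := hab ⟨a, ha⟩ ⟨b, hb⟩
    exact congrArg Subtype.val this
  have hc : Commute a g := hcomm
  have h2 : Commute a (g ^ k) := hc.zpow_right k
  calc b * g ^ k * a = b * (g ^ k * a) := mul_assoc _ _ _
    _ = b * (a * g ^ k) := by rw [← h2.eq]
    _ = b * a * g ^ k := (mul_assoc _ _ _).symm
    _ = a * b * g ^ k := by rw [← h1]
    _ = a * (b * g ^ k) := mul_assoc _ _ _

end Aux

theorem stmt6 (l : ℕ) (hl : l.Prime) (G : Type*) [Group G] [Fintype G]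
    (hnab : ¬ ∀ a b : G, a * b = b * a)
    (G' : Subgroup G) [G'.Normal] (hab : ∀ x y : G', x * y = y * x)
    (hidx : G'.index = l) :
    Subgroup.center G ≤ G' ∧
    (∀ g : G, g ∉ G' → g ^ l ∈ Subgroup.center G) ∧
    (∀ g : G, g ∉ G' →
      Subgroup.centralizer {g} = Subgroup.closure (insert g (Subgroup.center G : Set G))) ∧
    (∀ g : G, g ∉ G' →
      Nat.card {x : G // IsConj g x} * l = (Subgroup.center G).index) := by
  -- (i)
  have part1 : Subgroup.center G ≤ G' := by
    intro z hz
    by_contra hzG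
    apply hnab
    intro x y
    obtain ⟨c, hc, j, rfl⟩ := aux_decomp hl hidx hzG x
    obtain ⟨d, hd, k, rfl⟩ := aux_decomp hl hidx hzG y
    have hzc : ∀ w : G, Commute w z := fun w => Subgroup.mem_center_iff.mp hz w
    have hcd : Commute c d := by
      have := hab ⟨c, hc⟩ ⟨d, hd⟩
      exact congrArg Subtype.val this
    exact (Commute.mul_left (hcd.mul_right ((hzc c).zpow_right k))
      (((hzc d).symm.zpow_left j).mul_right
        (((Commute.refl z).zpow_right k).zpow_left j))).eq
  -- (ii)
  have part2 : ∀ g : G, g ∉ G' → g ^ l ∈ Subgroup.center G := by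
    intro g hg
    have hmem : g ^ l ∈ G' := by rw [← hidx]; exact G'.pow_index_mem g
    exact aux_center hab hl hidx hg hmem (((Commute.refl g).pow_left l).eq)
  -- (iii)
  have part3 : ∀ g : G, g ∉ G' →
      Subgroup.centralizer {g} = Subgroup.closure (insert g (Subgroup.center G : Set G)) := by
    intro g hg
    apply le_antisymm
    · intro x hx
      have hgx : g * x = x * g := Subgroup.mem_centralizer_iff.mp hx g rfl
      obtain ⟨a, ha, k, rfl⟩ := aux_decomp hl hidx hg x
      have hag : a * g = g * a := by
        have h2 : Commute g (g ^ k) := (Commute.refl g).zpow_right k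
        have : g * (a * g ^ k) = a * g ^ k * g := hgx
        rw [← mul_assoc, mul_assoc a, ← h2.eq, ← mul_assoc] at this
        exact (mul_right_cancel this).symm
      have haZ : a ∈ Subgroup.center G := aux_center hab hl hidx hg ha hag
      exact Subgroup.mul_mem _
        (Subgroup.subset_closure (Set.mem_insert_of_mem _ haZ))
        (Subgroup.zpow_mem _ (Subgroup.subset_closure (Set.mem_insert _ _)) k)
    · rw [Subgroup.closure_le]
      rintro x (rfl | hx)
      · exact Subgroup.mem_centralizer_iff.mpr (fun y hy => by rw [Set.mem_singleton_iff.mp hy])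
      · exact Subgroup.mem_centralizer_iff.mpr
          (fun y hy => Subgroup.mem_center_iff.mp hx y)
  refine ⟨part1, part2, part3, ?_⟩
  -- (iv)
  intro g hg
  set Z := Subgroup.center G with hZdef
  set C := Subgroup.centralizer ({g} : Set G) with hCdef
  have hC : C = Subgroup.closure (insert g (Z : Set G)) := part3 g hg
  have hZle : Z ≤ C := fun z hz => Subgroup.mem_centralizer_iff.mpr
    (fun y hy => Subgroup.mem_center_iff.mp hz y)
  set φ := QuotientGroup.mk' Z with hφdef
  have hφsurj : Function.Surjective φ := QuotientGroup.mk'_surjective Z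
  have hker : φ.ker = Z := QuotientGroup.ker_mk' Z
  -- order of φ g is l
  have hg1 : φ g ≠ 1 := by
    intro h
    exact hg (part1 ((QuotientGroup.eq_one_iff g).mp h))
  have hgl : φ g ^ l = 1 := by
    rw [← map_pow]
    exact (QuotientGroup.eq_one_iff _).mpr (part2 g hg)
  have hord : orderOf (φ g) = l := by
    rcases hl.eq_one_or_self_of_dvd _ (orderOf_dvd_of_pow_eq_one hgl) with h | h
    · exact absurd (orderOf_eq_one_iff.mp h) hg1
    · exact h
  -- image of centralizer
  have hmap : C.map φ = Subgroup.zpowers (φ g) := by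
    apply le_antisymm
    · rw [hC, MonoidHom.map_closure, Subgroup.closure_le]
      rintro x ⟨y, (rfl | hy), rfl⟩
      · exact Subgroup.mem_zpowers _
      · have : φ y = 1 := (QuotientGroup.eq_one_iff y).mpr hy
        rw [this]; exact Subgroup.one_mem _
    · rw [Subgroup.zpowers_le]
      exact ⟨g, hC ▸ Subgroup.subset_closure (Set.mem_insert _ _), rfl⟩
  have hidxC : C.index = (Subgroup.zpowers (φ g)).index := by
    rw [← hmap]
    exact (Subgroup.index_map_eq C hφsurj (hker.le.trans hZle)).symm
  -- conjugacy class card = centralizer index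
  have hcard : Nat.card {x : G // IsConj g x} = C.index := by
    have he : {x : G // IsConj g x} ≃ MulAction.orbit (ConjAct G) g :=
      Equiv.subtypeEquivRight (fun x => by
        rw [ConjAct.mem_orbit_conjAct, isConj_comm])
    erw [Nat.card_congr he, hCdef, Subgroup.centralizer_eq_comap_stabilizer,
      Subgroup.index_comap_of_surjective _ (f := (ConjAct.toConjAct (G := G)).toMonoidHom)
        (ConjAct.toConjAct (G := G)).surjective,
      MulAction.index_stabilizer, Nat.card_coe_set_eq]
  rw [hcard, hidxC, Subgroup.index_eq_card]
  have := Subgroup.index_mul_card (Subgroup.zpowers (φ g))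
  rw [Nat.card_zpowers, hord] at this
  exact this
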